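/- Every tree on n ≥ 2 vertices admits a light h-labeling with h = ⌈log_{6/5} n⌉ + 1. -/

import Mathlib

open SimpleGraph

/-- A light `h`-labeling of a graph `G`: labels in `{1,…,h}` such that every vertex labeled `i`
has at most two neighbors with label `≥ i`, at most one of which has label `≥ i + 1`, and no two
adjacent vertices labeled `i` both have a neighbor with label `≥ i + 1`. -/
def IsLightLabeling {V : Type*} (G : SimpleGraph V) (h : ℕ) (lab : V → ℕ) : Prop :=
  (∀ v, lab v ∈ Finset.Icc 1 h) ∧
  (∀ v : V, {u : V | G.Adj v u ∧ lab v ≤ lab u}.ncard ≤ 2) ∧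
  (∀ v : V, {u : V | G.Adj v u ∧ lab v + 1 ≤ lab u}.ncard ≤ 1) ∧
  (∀ v w : V, G.Adj v w → lab v = lab w →
    ¬ ((∃ u, G.Adj v u ∧ lab v + 1 ≤ lab u) ∧ (∃ u, G.Adj w u ∧ lab w + 1 ≤ lab u)))

namespace LightAux

variable {V : Type*} [Fintype V] [DecidableEq V]

/-- The set of descendants of `v` with respect to the parent function `p`. -/
def subt (p : V → V) (v : V) : Set V := {u | ∃ k, p^[k] u = v}

/-- Subtree size. -/
noncomputable def sz (p : V → V) (v : V) : ℕ := (subt p v).ncard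

lemma mem_subt_self (p : V → V) (v : V) : v ∈ subt p v := ⟨0, rfl⟩

lemma sz_pos (p : V → V) (v : V) : 0 < sz p v := by
  rw [sz, Set.ncard_pos (Set.toFinite _)]
  exact ⟨v, mem_subt_self p v⟩

lemma sz_le_card (p : V → V) (v : V) : sz p v ≤ Fintype.card V := by
  have h := Set.ncard_le_ncard (Set.subset_univ (subt p v)) (Set.toFinite _)
  simpa [sz, Set.ncard_univ, Nat.card_eq_fintype_card] using h

lemma subt_subset (p : V → V) (v : V) : subt p v ⊆ subt p (p v) := by
  rintro u ⟨k, hk⟩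
  exact ⟨k + 1, by rw [Function.iterate_succ_apply', hk]⟩

section

variable {p : V → V} {r0 : V} {depth : V → ℕ}
variable (H1 : p r0 = r0) (H2 : ∀ v, v ≠ r0 → depth (p v) + 1 = depth v)
include H1 H2

lemma depth_p_le (v : V) : depth (p v) ≤ depth v := by
  by_cases hv : v = r0
  · subst hv; rw [H1]
  · have := H2 v hv; omega

lemma depth_iter_le (k : ℕ) (v : V) : depth (p^[k] v) ≤ depth v := by
  induction k generalizing v with
  | zero => simp
  | succ n ih =>
    rw [Function.iterate_succ_apply]
    exact (ih (p v)).trans (depth_p_le H1 H2 v)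

lemma depth_le_of_mem {u v : V} (h : u ∈ subt p v) : depth v ≤ depth u := by
  obtain ⟨k, hk⟩ := h
  rw [← hk]
  exact depth_iter_le H1 H2 k u

lemma p_not_mem {v : V} (hv : v ≠ r0) : p v ∉ subt p v := by
  intro h
  have h1 := depth_le_of_mem H1 H2 h
  have := H2 v hv
  omega

lemma sz_lt {v : V} (hv : v ≠ r0) : sz p v < sz p (p v) :=
  Set.ncard_lt_ncard
    ⟨subt_subset p v, fun hsub => p_not_mem H1 H2 hv (hsub (mem_subt_self p (p v)))⟩
    (Set.toFinite _)

lemma no_cross {v c1 c2 u : V} {k1 k2 : ℕ} (hc1 : p c1 = v) (h2 : c2 ≠ r0) (hc2 : p c2 = v)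
    (hne : c1 ≠ c2) (hk : k1 ≤ k2) (e1 : p^[k1] u = c1) (e2 : p^[k2] u = c2) : False := by
  have hm : p^[k2 - k1] c1 = c2 := by
    rw [← e1, ← Function.iterate_add_apply, show k2 - k1 + k1 = k2 from by omega]
    exact e2
  rcases Nat.eq_zero_or_pos (k2 - k1) with h0 | hpos
  · rw [h0, Function.iterate_zero_apply] at hm
    exact hne hm
  · obtain ⟨m, hmm⟩ : ∃ m, k2 - k1 = m + 1 := ⟨k2 - k1 - 1, by omega⟩
    rw [hmm, Function.iterate_succ_apply, hc1] at hm
    have hd : depth c2 ≤ depth v := by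
      rw [← hm]; exact depth_iter_le H1 H2 m v
    have h3 := H2 c2 h2
    rw [hc2] at h3
    omega

lemma heavy_unique {v c1 c2 : V} (hc1 : p c1 = v) (hc2 : p c2 = v) (h1 : c1 ≠ r0)
    (h2 : c2 ≠ r0) (hh1 : sz p v < 2 * sz p c1) (hh2 : sz p v < 2 * sz p c2) : c1 = c2 := by
  by_contra hne
  have hdisj : Disjoint (subt p c1) (subt p c2) := by
    rw [Set.disjoint_left]
    rintro u ⟨k1, e1⟩ ⟨k2, e2⟩
    rcases le_total k1 k2 with hk | hk
    · exact no_cross H1 H2 hc1 h2 hc2 hne hk e1 e2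
    · exact no_cross H1 H2 hc2 h1 hc1 (Ne.symm hne) hk e2 e1
  have hsub : insert v (subt p c1 ∪ subt p c2) ⊆ subt p v := by
    apply Set.insert_subset (mem_subt_self p v)
    apply Set.union_subset
    · rw [← hc1]; exact subt_subset p c1
    · rw [← hc2]; exact subt_subset p c2
  have hvn : v ∉ subt p c1 ∪ subt p c2 := by
    intro h
    rcases h with h | h
    · exact p_not_mem H1 H2 h1 (by rwa [hc1]) 
    · exact p_not_mem H1 H2 h2 (by rwa [hc2])
  have e1 : (subt p c1 ∪ subt p c2).ncard = sz p c1 + sz p c2 :=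
    Set.ncard_union_eq hdisj (Set.toFinite _) (Set.toFinite _)
  have e2 : (insert v (subt p c1 ∪ subt p c2)).ncard = sz p c1 + sz p c2 + 1 := by
    rw [Set.ncard_insert_of_notMem hvn (Set.toFinite _), e1]
  have e3 : sz p c1 + sz p c2 + 1 ≤ sz p v := by
    rw [← e2]
    exact Set.ncard_le_ncard hsub (Set.toFinite _)
  omega

end

/-- Iterated heavy-path apex with fuel. -/
noncomputable def apexF (p : V → V) (r0 : V) : ℕ → V → V
  | 0, v => v
  | n + 1, v => if v ≠ r0 ∧ sz p (p v) < 2 * sz p v then apexF p r0 n (p v) else v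

/-- The apex of the heavy path through `v`. -/
noncomputable def apex (p : V → V) (r0 : V) (depth : V → ℕ) (v : V) : V :=
  apexF p r0 (depth v) v

/-- The labeling. -/
noncomputable def lab (p : V → V) (r0 : V) (depth : V → ℕ) (v : V) : ℕ :=
  Nat.log 2 (sz p (apex p r0 depth v)) + 1

lemma apexF_light {p : V → V} {r0 : V} {v : V}
    (hv : v = r0 ∨ ¬(sz p (p v) < 2 * sz p v)) : ∀ n, apexF p r0 n v = v
  | 0 => rfl
  | n + 1 => by
    rw [apexF, if_neg (by tauto)]

lemma apexF_heavy {p : V → V} {r0 : V} {v : V} (hv : v ≠ r0)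
    (hh : sz p (p v) < 2 * sz p v) (n : ℕ) :
    apexF p r0 (n + 1) v = apexF p r0 n (p v) := by
  rw [apexF, if_pos ⟨hv, hh⟩]

lemma apex_light {p : V → V} {r0 : V} {depth : V → ℕ} {v : V}
    (hv : v = r0 ∨ ¬(sz p (p v) < 2 * sz p v)) : apex p r0 depth v = v :=
  apexF_light hv _

section

variable {p : V → V} {r0 : V} {depth : V → ℕ}
variable (H1 : p r0 = r0) (H2 : ∀ v, v ≠ r0 → depth (p v) + 1 = depth v)
include H2

lemma apex_heavy {v : V} (hv : v ≠ r0) (hh : sz p (p v) < 2 * sz p v) :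
    apex p r0 depth v = apex p r0 depth (p v) := by
  have hd := H2 v hv
  rw [apex, apex, ← hd, apexF_heavy hv hh]

include H1

lemma sz_apex_ge : ∀ (n : ℕ) (v : V), depth v ≤ n → sz p v ≤ sz p (apex p r0 depth v) := by
  intro n
  induction n with
  | zero =>
    intro v hv
    by_cases hl : v = r0 ∨ ¬(sz p (p v) < 2 * sz p v)
    · rw [apex_light hl]
    · push_neg at hl
      have := H2 v hl.1
      omega
  | succ n ih =>
    intro v hv
    by_cases hl : v = r0 ∨ ¬(sz p (p v) < 2 * sz p v)
    · rw [apex_light hl]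
    · push_neg at hl
      obtain ⟨hv0, hh⟩ := hl
      have hd := H2 v hv0
      rw [apex_heavy H2 hv0 hh]
      exact (le_of_lt (sz_lt H1 H2 hv0)).trans (ih (p v) (by omega))

lemma lab_ge (v : V) : Nat.log 2 (sz p v) + 1 ≤ lab p r0 depth v := by
  have := sz_apex_ge H1 H2 (depth v) v le_rfl
  exact Nat.add_le_add_right (Nat.log_mono_right this) 1

lemma lab_heavy {v : V} (hv : v ≠ r0) (hh : sz p (p v) < 2 * sz p v) :
    lab p r0 depth v = lab p r0 depth (p v) := by
  rw [lab, lab, apex_heavy H2 hv hh]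

lemma lab_light {v : V} (hv : v ≠ r0) (hl : 2 * sz p v ≤ sz p (p v)) :
    lab p r0 depth v + 1 ≤ lab p r0 depth (p v) := by
  have h0 : lab p r0 depth v = Nat.log 2 (sz p v) + 1 := by
    rw [lab, apex_light (Or.inr (by omega))]
  have h1 : Nat.log 2 (sz p v) + 1 = Nat.log 2 (sz p v * 2) :=
    (Nat.log_mul_base one_lt_two (sz_pos p v).ne').symm
  have h2 : Nat.log 2 (sz p v * 2) ≤ Nat.log 2 (sz p (p v)) :=
    Nat.log_mono_right (by omega)
  have h3 := lab_ge H1 H2 (p v)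
  omega

lemma lab_child_le {v : V} (hv : v ≠ r0) : lab p r0 depth v ≤ lab p r0 depth (p v) := by
  by_cases hh : sz p (p v) < 2 * sz p v
  · rw [lab_heavy H1 H2 hv hh]
  · have := lab_light H1 H2 hv (by omega)
    omega

lemma lab_le_card (v : V) : lab p r0 depth v ≤ Nat.log 2 (Fintype.card V) + 1 :=
  Nat.add_le_add_right (Nat.log_mono_right (sz_le_card p _)) 1

end

lemma key_log (n : ℕ) (hn : 2 ≤ n) : Nat.log 2 n ≤ ⌈Real.logb (6 / 5) n⌉₊ := by
  have hpow : (2 : ℕ) ^ Nat.log 2 n ≤ n := Nat.pow_log_le_self 2 (by omega)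
  have hnpos : (0 : ℝ) < (n : ℝ) := by
    have : (0 : ℕ) < n := by omega
    exact_mod_cast this
  have h1 : ((Nat.log 2 n : ℕ) : ℝ) ≤ Real.logb (6 / 5) n := by
    rw [Real.le_logb_iff_rpow_le (by norm_num) hnpos]
    calc ((6 : ℝ) / 5) ^ ((Nat.log 2 n : ℕ) : ℝ)
        = ((6 : ℝ) / 5) ^ (Nat.log 2 n) := Real.rpow_natCast _ _
      _ ≤ (2 : ℝ) ^ (Nat.log 2 n) := by
          apply pow_le_pow_left₀ (by norm_num) (by norm_num)
      _ ≤ (n : ℝ) := by exact_mod_cast hpow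
  have h2 : Real.logb (6 / 5) n ≤ (⌈Real.logb (6 / 5) n⌉₊ : ℝ) := Nat.le_ceil _
  exact_mod_cast h1.trans h2

end LightAux

/-- Every tree on `n ≥ 2` vertices admits a light `h`-labeling with
`h = ⌈log_{6/5} n⌉ + 1`. -/
theorem stmt_12 {V : Type*} [Fintype V] (G : SimpleGraph V) (hT : G.IsTree)
    (hn : 2 ≤ Fintype.card V) :
    ∃ lab : V → ℕ,
      IsLightLabeling G (⌈Real.logb (6 / 5) (Fintype.card V)⌉₊ + 1) lab := by
  classical
  have hne : Nonempty V := by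
    have : 0 < Fintype.card V := by omega
    exact Fintype.card_pos_iff.mp this
  obtain ⟨r0⟩ := hne
  choose pth hpth using (hT.existsUnique_path · r0)
  have hpath : ∀ v, (pth v).IsPath := fun v => (hpth v).1
  have huniq : ∀ (v : V) (q : G.Walk v r0), q.IsPath → q = pth v := fun v q hq =>
    (hpth v).2 q hq
  set parent : V → V := fun v => (pth v).getVert 1 with hparent
  set depth : V → ℕ := fun v => (pth v).length with hdepth
  have hr0 : pth r0 = Walk.nil := (huniq r0 Walk.nil Walk.IsPath.nil).symm
  have H1 : parent r0 = r0 := by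
    simp only [hparent, hr0]
    rfl
  have hNil : ∀ v : V, v ≠ r0 → ¬(pth v).Nil := fun v hv => Walk.not_nil_of_ne hv
  have hadjp : ∀ v : V, v ≠ r0 → G.Adj v (parent v) := fun v hv =>
    (pth v).adj_snd (hNil v hv)
  have htail : ∀ v : V, v ≠ r0 → (pth v).tail = pth (parent v) := by
    intro v hv
    exact huniq _ _ ((hpath v).tail)
  have H2 : ∀ v, v ≠ r0 → depth (parent v) + 1 = depth v := by
    intro v hv
    have := Walk.length_tail_add_one (hNil v hv)
    rw [htail v hv] at this
    exact this
  -- membership in the path forces smaller depth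
  have hdrop : ∀ (v u : V) (h : u ∈ (pth v).support), u ≠ v → depth u < depth v := by
    intro v u hmem hne
    have hq : ((pth v).dropUntil u hmem).IsPath := (hpath v).dropUntil hmem
    have hequ : (pth v).dropUntil u hmem = pth u := huniq u _ hq
    have hspec := (pth v).take_spec hmem
    have hlen := congrArg Walk.length hspec
    rw [Walk.length_append, hequ] at hlen
    have htu : 0 < ((pth v).takeUntil u hmem).length := by
      rcases Nat.eq_zero_or_pos ((pth v).takeUntil u hmem).length with h0 | h
      · exact absurd (Walk.eq_of_length_eq_zero h0) hne.symm
      · exact h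
    simp only [hdepth]
    omega
  have hcons : ∀ (v u : V), G.Adj v u → u ∉ (pth v).support →
      u ≠ r0 ∧ parent u = v := by
    intro v u hadj hnm
    have hp : (Walk.cons hadj.symm (pth v)).IsPath :=
      (Walk.cons_isPath_iff _ _).2 ⟨hpath v, hnm⟩
    have hequ : Walk.cons hadj.symm (pth v) = pth u := huniq u _ hp
    have hur : u ≠ r0 := by
      intro h
      subst h
      rw [hr0] at hequ
      exact absurd (congrArg Walk.length hequ) (by simp)
    refine ⟨hur, ?_⟩
    simp only [hparent, ← hequ]
    simp [Walk.getVert_cons_succ]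
  have HAdj : ∀ v u : V, G.Adj v u →
      (v ≠ r0 ∧ parent v = u) ∨ (u ≠ r0 ∧ parent u = v) := by
    intro v u hadj
    by_cases hmem : u ∈ (pth v).support
    · have hdu : depth u < depth v := hdrop v u hmem hadj.ne'
      have hvm : v ∉ (pth u).support := by
        intro hvm
        have := hdrop u v hvm hadj.ne
        omega
      left
      obtain ⟨h1, h2⟩ := hcons u v hadj.symm hvm
      exact ⟨h1, h2⟩
    · right
      exact hcons v u hadj hmem
  -- the labeling
  refine ⟨LightAux.lab parent r0 depth, ?_, ?_, ?_, ?_⟩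
  · -- labels in Icc 1 h
    intro v
    rw [Finset.mem_Icc]
    constructor
    · rw [LightAux.lab]; omega
    · have h1 := LightAux.lab_le_card (p := parent) (r0 := r0) (depth := depth) H1 H2 v
      have h2 := LightAux.key_log (Fintype.card V) hn
      omega
  · -- at most two neighbors with ≥ label
    intro v
    have hsubset : {u : V | G.Adj v u ∧ LightAux.lab parent r0 depth v ≤ LightAux.lab parent r0 depth u}
        ⊆ {parent v} ∪ {c : V | parent c = v ∧ c ≠ r0 ∧
              LightAux.sz parent v < 2 * LightAux.sz parent c} := by
      rintro u ⟨hadj, hle⟩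
      rcases HAdj v u hadj with ⟨hv0, hpv⟩ | ⟨hu0, hpu⟩
      · left; exact hpv.symm
      · right
        refine ⟨hpu, hu0, ?_⟩
        by_contra hlight
        have := LightAux.lab_light (p := parent) (r0 := r0) (depth := depth) H1 H2 hu0 (by rw [hpu]; omega)
        rw [hpu] at this
        omega
    by_cases hex : ∃ c : V, parent c = v ∧ c ≠ r0 ∧
        LightAux.sz parent v < 2 * LightAux.sz parent c
    · obtain ⟨c, hc1, hc2, hc3⟩ := hex
      have hsub2 : {u : V | G.Adj v u ∧ LightAux.lab parent r0 depth v ≤ LightAux.lab parent r0 depth u}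
          ⊆ {parent v, c} := by
        intro u hu
        rcases hsubset hu with h | ⟨h1, h2, h3⟩
        · exact Or.inl h
        · right
          exact LightAux.heavy_unique H1 H2 h1 hc1 h2 hc2 h3 hc3
      calc ({u : V | G.Adj v u ∧ LightAux.lab parent r0 depth v ≤ LightAux.lab parent r0 depth u}).ncard
          ≤ ({parent v, c} : Set V).ncard := Set.ncard_le_ncard hsub2 (Set.toFinite _)
        _ ≤ ({c} : Set V).ncard + 1 := Set.ncard_insert_le _ _
        _ ≤ 2 := by rw [Set.ncard_singleton]
    · have hsub2 : {u : V | G.Adj v u ∧ LightAux.lab parent r0 depth v ≤ LightAux.lab parent r0 depth u}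
          ⊆ {parent v} := by
        intro u hu
        rcases hsubset hu with h | ⟨h1, h2, h3⟩
        · exact h
        · exact absurd ⟨u, h1, h2, h3⟩ hex
      calc ({u : V | G.Adj v u ∧ LightAux.lab parent r0 depth v ≤ LightAux.lab parent r0 depth u}).ncard
          ≤ ({parent v} : Set V).ncard := Set.ncard_le_ncard hsub2 (Set.toFinite _)
        _ ≤ 2 := by rw [Set.ncard_singleton]; omega
  · -- at most one neighbor with strictly greater label
    intro v
    have hsub : {u : V | G.Adj v u ∧ LightAux.lab parent r0 depth v + 1 ≤ LightAux.lab parent r0 depth u}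
        ⊆ {parent v} := by
      rintro u ⟨hadj, hle⟩
      rcases HAdj v u hadj with ⟨hv0, hpv⟩ | ⟨hu0, hpu⟩
      · exact hpv.symm
      · exfalso
        have := LightAux.lab_child_le (p := parent) (r0 := r0) (depth := depth) H1 H2 hu0
        rw [hpu] at this
        omega
    calc ({u : V | G.Adj v u ∧ LightAux.lab parent r0 depth v + 1 ≤ LightAux.lab parent r0 depth u}).ncard
        ≤ ({parent v} : Set V).ncard := Set.ncard_le_ncard hsub (Set.toFinite _)
      _ = 1 := Set.ncard_singleton _
  · -- condition on adjacent equal labels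
    intro v w hadj heq
    have hnoup : ∀ x y : V, x ≠ r0 → parent x = y →
        LightAux.lab parent r0 depth x = LightAux.lab parent r0 depth y →
        ¬∃ u, G.Adj x u ∧ LightAux.lab parent r0 depth x + 1 ≤ LightAux.lab parent r0 depth u := by
      rintro x y hx0 hpx hlxy ⟨u, hu, hlu⟩
      rcases HAdj x u hu with ⟨hx0', hpx'⟩ | ⟨hu0, hpu⟩
      · rw [hpx] at hpx'
        subst hpx'
        omega
      · have := LightAux.lab_child_le (p := parent) (r0 := r0) (depth := depth) H1 H2 hu0
        rw [hpu] at this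
        omega
    rcases HAdj v w hadj with ⟨hv0, hpv⟩ | ⟨hw0, hpw⟩
    · rintro ⟨hA, _⟩
      exact hnoup v w hv0 hpv heq hA
    · rintro ⟨_, hB⟩
      exact hnoup w v hw0 hpw heq.symm hB
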